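/- If f : ℝ → ℝ is continuous with f(0) = 0 and t ↦ f(t)/|t| is strictly increasing on ℝ \ {0}, then the function t ↦ (1/2) f(t) t − F(t) is strictly increasing on (0, ∞), where F(t) = ∫₀ᵗ f(s) ds. -/

import Mathlib

open Set intervalIntegral

theorem stmt0 (f : ℝ → ℝ) (hf : Continuous f) (hf0 : f 0 = 0)
    (hmono : StrictMonoOn (fun t => f t / |t|) {t : ℝ | t ≠ 0}) :
    StrictMonoOn (fun t => (1/2) * f t * t - ∫ s in (0:ℝ)..t, f s) (Set.Ioi (0:ℝ)) := by
  intro a ha b hb hab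
  simp only [mem_Ioi] at ha hb
  set g : ℝ → ℝ := fun t => f t / t with hg
  have hgmono : ∀ x y : ℝ, 0 < x → 0 < y → x < y → g x < g y := by
    intro x y hx hy hxy
    have := hmono (show x ∈ {t : ℝ | t ≠ 0} from ne_of_gt hx)
      (show y ∈ {t : ℝ | t ≠ 0} from ne_of_gt hy) hxy
    simpa [hg, abs_of_pos hx, abs_of_pos hy] using this
  have hfg : ∀ t : ℝ, 0 < t → f t = g t * t := by
    intro t ht
    exact (div_mul_cancel₀ (f t) ht.ne').symm
  -- split the integral
  have hsplit : (∫ s in (0:ℝ)..b, f s) = (∫ s in (0:ℝ)..a, f s) + ∫ s in a..b, f s := by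
    rw [integral_add_adjacent_intervals (hf.intervalIntegrable 0 a) (hf.intervalIntegrable a b)]
  -- key integral inequality
  have hab' : a < b := hab
  have hkey : (∫ s in a..b, f s) < ∫ s in a..b, g b * s := by
    apply integral_lt_integral_of_continuousOn_of_le_of_exists_lt hab'
      hf.continuousOn (by fun_prop)
    · intro x hx
      have hx0 : 0 < x := lt_trans ha hx.1
      rw [hfg x hx0]
      rcases eq_or_lt_of_le hx.2 with h | h
      · subst h; exact le_refl _
      · exact mul_le_mul_of_nonneg_right (le_of_lt (hgmono x b hx0 hb h)) hx0.le
    · refine ⟨a, ⟨le_refl a, hab'.le⟩, ?_⟩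
      rw [hfg a ha]
      exact mul_lt_mul_of_pos_right (hgmono a b ha hb hab') ha
  have hint : (∫ s in a..b, g b * s) = g b * (b^2 - a^2) / 2 := by
    rw [intervalIntegral.integral_const_mul, integral_id]
    ring
  have hfa : f a = g a * a := hfg a ha
  have hfb : f b = g b * b := hfg b hb
  have hga : g a < g b := hgmono a b ha hb hab'
  simp only
  rw [hsplit, hfa, hfb]
  nlinarith [sq_nonneg a, sq_nonneg (a - b), hkey, hint, mul_pos ha ha]
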